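/- (Supermodularity of E_p) For any p ≥ 1, the error function E_p(T) = Σ_{i=1}^m (b_i - max_{j∈T}(a_{ij} + x̂_j))^p is supermodular on nonempty subsets of {1,…,n}: for all nonempty C ⊆ B ⊆ {1,…,n} and k ∉ B, E_p(C ∪ {k}) - E_p(C) ≤ E_p(B ∪ {k}) - E_p(B). -/

import Mathlib

/-- Max-plus matrix-vector product over `ℝ_max = WithBot ℝ`:
`[A ⊞ x]_i = max_k (a_{ik} + x_k)` with `a + (-∞) = -∞`. -/
noncomputable def maxPlus {m n : ℕ} (A : Fin m → Fin n → ℝ) (x : Fin n → WithBot ℝ)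
    (i : Fin m) : WithBot ℝ :=
  Finset.univ.sup fun k => (A i k : WithBot ℝ) + x k

/-- The principal solution `x̂_j = min_i (b_i - a_{ij})`. -/
noncomputable def principalSol {m n : ℕ} (A : Fin (m + 1) → Fin n → ℝ)
    (b : Fin (m + 1) → ℝ) (j : Fin n) : ℝ :=
  Finset.univ.inf' Finset.univ_nonempty fun i => b i - A i j

/-- The ℓ_p error function `E_p`. -/
noncomputable def Ep {m n : ℕ} (A : Fin (m + 1) → Fin (n + 1) → ℝ) (b : Fin (m + 1) → ℝ)
    (p : ℝ) (T : Finset (Fin (n + 1))) (hT : T.Nonempty) : ℝ :=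
  ∑ i, (b i - T.sup' hT fun j => A i j + principalSol A b j) ^ p

lemma key_aux (p t x y : ℝ) (hp : 1 ≤ p) (ht : 0 ≤ t) (hy : 0 ≤ y) (hxy : y ≤ x) :
    y ^ p - (min t y) ^ p ≤ x ^ p - (min t x) ^ p := by
  have hp0 : 0 ≤ p := zero_le_one.trans hp
  rcases le_total t y with h | h
  · rw [min_eq_left h, min_eq_left (h.trans hxy)]
    have := Real.rpow_le_rpow hy hxy hp0
    linarith
  · rw [min_eq_right h]
    have h1 : (min t x) ^ p ≤ x ^ p :=
      Real.rpow_le_rpow (le_min ht (hy.trans hxy)) (min_le_right t x) hp0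
    linarith

/-- Supermodularity of `E_p` on nonempty subsets. -/
theorem Ep_supermodular (m n : ℕ) (A : Fin (m + 1) → Fin (n + 1) → ℝ)
    (b : Fin (m + 1) → ℝ) (p : ℝ) (hp : 1 ≤ p)
    (C B : Finset (Fin (n + 1))) (hC : C.Nonempty) (hCB : C ⊆ B)
    (k : Fin (n + 1)) (hk : k ∉ B) :
    Ep A b p (insert k C) (Finset.insert_nonempty k C) - Ep A b p C hC
      ≤ Ep A b p (insert k B) (Finset.insert_nonempty k B) - Ep A b p B (hC.mono hCB) := by
  have hB : B.Nonempty := hC.mono hCB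
  unfold Ep
  rw [← Finset.sum_sub_distrib, ← Finset.sum_sub_distrib]
  apply Finset.sum_le_sum
  intro i _
  set g : Fin (n + 1) → ℝ := fun j => A i j + principalSol A b j with hg
  have hbj : ∀ j, g j ≤ b i := by
    intro j
    have := Finset.inf'_le (f := fun i' => b i' - A i' j) (Finset.mem_univ i)
    simp only [hg, principalSol]
    linarith
  have hsup : ∀ (T : Finset (Fin (n + 1))) (hT : T.Nonempty), T.sup' hT g ≤ b i := by
    intro T hT
    exact Finset.sup'_le hT g fun j _ => hbj j
  have hins : ∀ (T : Finset (Fin (n + 1))) (hT : T.Nonempty),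
      b i - (insert k T).sup' (Finset.insert_nonempty k T) g
        = min (b i - g k) (b i - T.sup' hT g) := by
    intro T hT
    rw [Finset.sup'_insert (H := hT)]
    rcases le_total (g k) (T.sup' hT g) with h | h
    · rw [sup_eq_right.mpr h, min_eq_right (by linarith)]
    · rw [sup_eq_left.mpr h, min_eq_left (by linarith)]
  rw [hins C hC, hins B hB]
  have hmono : B.sup' hB g ≥ C.sup' hC g := Finset.sup'_mono g hCB hC
  have := key_aux p (b i - g k) (b i - C.sup' hC g) (b i - B.sup' hB g) hp
    (by linarith [hbj k]) (by linarith [hsup B hB]) (by linarith)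
  linarith
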